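/- Let {λ_i}_{i=1}^∞ be non-negative reals with 0 < ∑_i λ_i < ∞ and λ_i > 0 for all i, and let τ_i ~ Exp(λ_i) be independent. Then P(τ_n < inf_{m > n} τ_m for all n) is positive if and only if ∏_{n=1}^∞ λ_n/(∑_{m≥n} λ_m) > 0; moreover for each fixed n, the probability that τ_n is the minimum of {τ_m : m ≥ n} equals λ_n/∑_{m≥n} λ_m. -/

import Mathlib

open MeasureTheory ProbabilityTheory Real Set
open scoped ENNReal

section Aux

lemma expMeasure_Iic {r : ℝ} (hr : 0 < r) (x : ℝ) :
    expMeasure r (Set.Iic x)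
      = ENNReal.ofReal (if 0 ≤ x then 1 - Real.exp (-(r * x)) else 0) := by
  have : expMeasure r = volume.withDensity (exponentialPDF r) := rfl
  rw [this, withDensity_apply _ measurableSet_Iic]
  exact lintegral_exponentialPDF_eq_antiDeriv hr x

lemma expMeasure_Ioi {r : ℝ} (hr : 0 < r) {a : ℝ} (ha : 0 ≤ a) :
    expMeasure r (Set.Ioi a) = ENNReal.ofReal (Real.exp (-(r * a))) := by
  have hprob : IsProbabilityMeasure (expMeasure r) := isProbabilityMeasure_expMeasure hr
  have h1 : expMeasure r (Set.Iic a) = ENNReal.ofReal (1 - Real.exp (-(r * a))) := by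
    rw [expMeasure_Iic hr, if_pos ha]
  have h2 : Set.Ioi a = (Set.Iic a)ᶜ := Set.compl_Iic.symm
  rw [h2, measure_compl measurableSet_Iic (measure_ne_top _ _), h1, measure_univ]
  have hle : Real.exp (-(r * a)) ≤ 1 := by
    rw [Real.exp_le_one_iff]
    simp only [Left.neg_nonpos_iff]
    positivity
  have : (1 : ℝ≥0∞) = ENNReal.ofReal 1 := by simp
  rw [this, ← ENNReal.ofReal_sub _ (by linarith : (0:ℝ) ≤ 1 - Real.exp (-(r*a)))]
  norm_num

end Aux

lemma expMeasure_null_Iic_zero {r : ℝ} : expMeasure r (Set.Iic 0) = 0 := by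
  have : expMeasure r = volume.withDensity (exponentialPDF r) := rfl
  rw [this, withDensity_apply _ measurableSet_Iic]
  have : Set.Iic (0:ℝ) = Set.Iio 0 ∪ {0} := by
    ext x; simp [le_iff_lt_or_eq]
  rw [this]
  refine le_antisymm ?_ zero_le
  calc ∫⁻ y in (Set.Iio 0 ∪ {0}), exponentialPDF r y
      ≤ (∫⁻ y in Set.Iio (0:ℝ), exponentialPDF r y) + ∫⁻ y in ({0}:Set ℝ), exponentialPDF r y :=
        lintegral_union_le _ _ _
    _ = 0 := by
        rw [lintegral_exponentialPDF_of_nonpos le_rfl]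
        simp [Measure.restrict_singleton]

lemma map_eq_expMeasure {Ω : Type*} [MeasurableSpace Ω] (P : Measure Ω) [IsProbabilityMeasure P]
    {r : ℝ} (hr : 0 < r) {X : Ω → ℝ} (hX : Measurable X)
    (htail : ∀ t : ℝ, 0 ≤ t → P {ω | t < X ω} = ENNReal.ofReal (Real.exp (-(r * t)))) :
    P.map X = expMeasure r := by
  have : IsProbabilityMeasure (P.map X) := Measure.isProbabilityMeasure_map hX.aemeasurable
  refine Measure.ext_of_Iic _ _ (fun a => ?_)
  rw [Measure.map_apply hX measurableSet_Iic, expMeasure_Iic hr]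
  have key : ∀ t : ℝ, 0 ≤ t → P (X ⁻¹' Set.Iic t) = ENNReal.ofReal (1 - Real.exp (-(r * t))) := by
    intro t ht
    have hc : {ω | t < X ω} = (X ⁻¹' Set.Iic t)ᶜ := by
      ext ω; simp [not_le]
    have := htail t ht
    rw [hc] at this
    have h2 := measure_compl (s := X ⁻¹' Set.Iic t) (hX measurableSet_Iic) (measure_ne_top P _)
    rw [this, measure_univ] at h2
    have hle : Real.exp (-(r * t)) ≤ 1 := by
      rw [Real.exp_le_one_iff]; simp only [Left.neg_nonpos_iff]; positivity
    have hpos := Real.exp_pos (-(r * t))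
    have : P (X ⁻¹' Set.Iic t) = 1 - ENNReal.ofReal (Real.exp (-(r * t))) := by
      have hle' : ENNReal.ofReal (Real.exp (-(r * t))) ≤ 1 := by
        rw [show (1:ℝ≥0∞) = ENNReal.ofReal 1 by simp]
        exact ENNReal.ofReal_le_ofReal hle
      rw [h2, ENNReal.sub_sub_cancel ENNReal.one_ne_top prob_le_one]
    rw [this, show (1:ℝ≥0∞) = ENNReal.ofReal 1 by simp,
      ← ENNReal.ofReal_sub 1 (Real.exp_pos _).le]
  by_cases ha : 0 ≤ a
  · rw [if_pos ha]; exact key a ha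
  · rw [if_neg ha, ENNReal.ofReal_zero]
    refine le_antisymm ?_ zero_le
    have h0 : P (X ⁻¹' Set.Iic a) ≤ P (X ⁻¹' Set.Iic 0) :=
      measure_mono (Set.preimage_mono (Set.Iic_subset_Iic.mpr (le_of_not_ge ha)))
    rw [key 0 le_rfl] at h0
    simpa using h0

lemma measurable_exponentialPDF (r : ℝ) : Measurable (exponentialPDF r) :=
  (measurable_exponentialPDFReal r).ennreal_ofReal

lemma exp_tail_lintegral {r R a : ℝ} (hr : 0 < r) (hR : 0 ≤ R) (ha : 0 ≤ a) :
    ∫⁻ x in Set.Ioi a, ENNReal.ofReal (Real.exp (-(R * x))) ∂(expMeasure r)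
      = ENNReal.ofReal (r / (r + R) * Real.exp (-((r + R) * a))) := by
  have hrR : 0 < r + R := by linarith
  have hmg : Measurable fun x : ℝ => ENNReal.ofReal (Real.exp (-(R * x))) := by
    apply Measurable.ennreal_ofReal
    exact (Real.continuous_exp.comp ((continuous_const.mul continuous_id).neg)).measurable
  have hrw : expMeasure r = volume.withDensity (exponentialPDF r) := rfl
  rw [hrw, restrict_withDensity measurableSet_Ioi,
    lintegral_withDensity_eq_lintegral_mul _ (measurable_exponentialPDF r) hmg]
  have hcongr : ∀ x ∈ Set.Ioi a,
      (exponentialPDF r * fun x => ENNReal.ofReal (Real.exp (-(R * x)))) x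
        = ENNReal.ofReal (r / (r + R)) * exponentialPDF (r + R) x := by
    intro x hx
    have hx0 : 0 ≤ x := le_trans ha (le_of_lt hx)
    simp only [Pi.mul_apply]
    rw [exponentialPDF_of_nonneg hx0, exponentialPDF_of_nonneg hx0,
      ← ENNReal.ofReal_mul (by positivity), ← ENNReal.ofReal_mul (by positivity)]
    congr 1
    rw [mul_assoc, ← Real.exp_add]
    have h1 : r / (r + R) * ((r + R) * Real.exp (-((r + R) * x)))
        = r * Real.exp (-((r + R) * x)) := by
      rw [← mul_assoc, div_mul_cancel₀ r (by linarith : r + R ≠ 0)]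
    rw [h1, show -(r * x) + -(R * x) = -((r + R) * x) by ring]
  rw [setLIntegral_congr_fun measurableSet_Ioi hcongr, lintegral_const_mul _
    (measurable_exponentialPDF (r + R))]
  have htail : ∫⁻ x in Set.Ioi a, exponentialPDF (r + R) x ∂volume
      = ENNReal.ofReal (Real.exp (-((r + R) * a))) := by
    have : expMeasure (r + R) (Set.Ioi a) = ∫⁻ x in Set.Ioi a, exponentialPDF (r + R) x ∂volume := by
      rw [show expMeasure (r+R) = volume.withDensity (exponentialPDF (r+R)) from rfl,
        withDensity_apply _ measurableSet_Ioi]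
    rw [← this, expMeasure_Ioi hrR ha]
  rw [htail, ← ENNReal.ofReal_mul (by positivity)]

lemma fubini_step {Ω : Type*} [MeasurableSpace Ω] (P : Measure Ω) [IsProbabilityMeasure P]
    (X : Ω → ℝ) (hX : Measurable X) {k : ℕ} (Y : Ω → (Fin k → ℝ)) (hY : Measurable Y)
    (hXY : IndepFun X Y P) (ν : Measure ℝ) [IsProbabilityMeasure ν] (hlaw : P.map X = ν)
    (S : Set (Fin k → ℝ)) (hS : MeasurableSet S)
    (w : (Fin k → ℝ) → ℝ≥0∞) (hw : Measurable w)
    (g : ℝ → ℝ≥0∞) (hg : Measurable g)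
    (c : (Fin k → ℝ) → ℝ) (hc : Measurable c)
    (φ : ℝ → ℝ≥0∞) (hφm : Measurable φ)
    (hSc : ∀ y ∈ S, 0 ≤ c y)
    (hφ : ∀ t : ℝ, 0 ≤ t → ∫⁻ x in Set.Ioi t, g x ∂ν = φ t) :
    ∫⁻ ω, Set.indicator {ω | Y ω ∈ S ∧ c (Y ω) < X ω} (fun ω => w (Y ω) * g (X ω)) ω ∂P
      = ∫⁻ ω, Set.indicator {ω | Y ω ∈ S} (fun ω => w (Y ω) * φ (c (Y ω))) ω ∂P := by
  classical
  have hPY : IsProbabilityMeasure (P.map Y) := Measure.isProbabilityMeasure_map hY.aemeasurable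
  set F : ℝ × (Fin k → ℝ) → ℝ≥0∞ :=
    fun p => Set.indicator {p : ℝ × (Fin k → ℝ) | p.2 ∈ S ∧ c p.2 < p.1}
      (fun p => w p.2 * g p.1) p with hF
  have hFmeas : Measurable F := by
    apply Measurable.indicator
    · exact (hw.comp measurable_snd).mul (hg.comp measurable_fst)
    · exact (measurable_snd hS).inter (measurableSet_lt (hc.comp measurable_snd) measurable_fst)
  set G : (Fin k → ℝ) → ℝ≥0∞ := fun y => Set.indicator S (fun y => w y * φ (c y)) y with hG
  have hGmeas : Measurable G := (hw.mul (hφm.comp hc)).indicator hS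
  have hinner : ∀ y : (Fin k → ℝ), ∫⁻ x, F (x, y) ∂ν = G y := by
    intro y
    by_cases hy : y ∈ S
    · have heq : (fun x => F (x, y)) = Set.indicator (Set.Ioi (c y)) (fun x => w y * g x) := by
        ext x
        by_cases hx : c y < x
        · rw [Set.indicator_of_mem (Set.mem_Ioi.mpr hx)]
          exact Set.indicator_of_mem (by exact ⟨hy, hx⟩) _
        · rw [Set.indicator_of_notMem (by simpa using hx)]
          exact Set.indicator_of_notMem (by simp [hx]) _
      rw [heq, lintegral_indicator measurableSet_Ioi, lintegral_const_mul _ hg,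
        hφ (c y) (hSc y hy)]
      exact (Set.indicator_of_mem hy (fun y => w y * φ (c y))).symm
    · have heq : (fun x => F (x, y)) = fun _ => 0 := by
        ext x; exact Set.indicator_of_notMem (by simp [hy]) _
      rw [heq, lintegral_zero]
      exact (Set.indicator_of_notMem hy (fun y => w y * φ (c y))).symm
  have hmap : P.map (fun ω => (X ω, Y ω)) = ν.prod (P.map Y) := by
    rw [← hlaw]
    exact (indepFun_iff_map_prod_eq_prod_map_map hX.aemeasurable hY.aemeasurable).mp hXY
  calc ∫⁻ ω, Set.indicator {ω | Y ω ∈ S ∧ c (Y ω) < X ω} (fun ω => w (Y ω) * g (X ω)) ω ∂P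
      = ∫⁻ ω, F (X ω, Y ω) ∂P := rfl
    _ = ∫⁻ p, F p ∂(P.map (fun ω => (X ω, Y ω))) := (lintegral_map hFmeas (hX.prodMk hY)).symm
    _ = ∫⁻ p, F p ∂(ν.prod (P.map Y)) := by rw [hmap]
    _ = ∫⁻ y, ∫⁻ x, F (x, y) ∂ν ∂(P.map Y) := lintegral_prod_symm F hFmeas.aemeasurable
    _ = ∫⁻ y, G y ∂(P.map Y) := by simp_rw [hinner]
    _ = ∫⁻ ω, G (Y ω) ∂P := lintegral_map hGmeas hY
    _ = _ := rfl

lemma indep_tuple {Ω : Type*} [MeasurableSpace Ω] {P : Measure Ω}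
    {τ : ℕ → Ω → ℝ} (hτ : ∀ i, Measurable (τ i))
    (hindep : iIndepFun τ P)
    (b k : ℕ) :
    IndepFun (τ (b + k)) (fun ω (i : Fin k) => τ (b + (i : ℕ)) ω) P := by
  classical
  have hdisj : Disjoint ({b + k} : Finset ℕ) (Finset.image (fun i => b + i) (Finset.range k)) := by
    simp only [Finset.disjoint_singleton_left, Finset.mem_image, Finset.mem_range, not_exists]
    intro i
    omega
  have h := hindep.indepFun_finset {b + k} (Finset.image (fun i => b + i) (Finset.range k))
    hdisj hτ
  have h2 := h.comp (_mγ := inferInstance) (_mγ' := inferInstance)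
    (φ := fun v : (({b + k} : Finset ℕ) : Type) → ℝ => v ⟨b + k, Finset.mem_singleton_self _⟩)
    (ψ := fun v : ((Finset.image (fun i => b + i) (Finset.range k) : Finset ℕ) : Type) → ℝ =>
      fun i : Fin k => v ⟨b + (i : ℕ),
        Finset.mem_image.mpr ⟨(i : ℕ), Finset.mem_range.mpr i.isLt, rfl⟩⟩)
    (measurable_pi_apply _)
    (measurable_pi_lambda _ fun i => measurable_pi_apply _)
  exact h2

lemma measurable_chainSet {k N : ℕ} :
    MeasurableSet {y : Fin k → ℝ |
      (∀ i : Fin k, (i : ℕ) = 0 → 0 ≤ y i) ∧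
      ∀ i j : Fin k, i < j → (i : ℕ) < N → y i < y j} := by
  rw [Set.setOf_and]
  refine MeasurableSet.inter ?_ ?_
  · rw [Set.setOf_forall]
    refine MeasurableSet.iInter fun i => ?_
    by_cases hi : (i : ℕ) = 0
    · have : {y : Fin k → ℝ | (i : ℕ) = 0 → 0 ≤ y i} = {y | 0 ≤ y i} := by
        ext y; simp [hi]
      rw [this]
      exact measurableSet_le measurable_const (measurable_pi_apply i)
    · have : {y : Fin k → ℝ | (i : ℕ) = 0 → 0 ≤ y i} = Set.univ := by
        ext y; simp [hi]
      rw [this]; exact MeasurableSet.univ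
  · rw [Set.setOf_forall]
    refine MeasurableSet.iInter fun i => ?_
    rw [Set.setOf_forall]
    refine MeasurableSet.iInter fun j => ?_
    by_cases hij : i < j ∧ (i : ℕ) < N
    · have : {y : Fin k → ℝ | i < j → (i : ℕ) < N → y i < y j} = {y | y i < y j} := by
        ext y; simp [hij.1, hij.2]
      rw [this]
      exact measurableSet_lt (measurable_pi_apply i) (measurable_pi_apply j)
    · have : {y : Fin k → ℝ | i < j → (i : ℕ) < N → y i < y j} = Set.univ := by
        ext y; simp only [Set.mem_setOf_eq, Set.mem_univ, iff_true]
        intro h1 h2; exact absurd ⟨h1, h2⟩ hij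
      rw [this]; exact MeasurableSet.univ

lemma measurable_chainEvent {Ω : Type*} [MeasurableSpace Ω]
    {τ : ℕ → Ω → ℝ} (hτ : ∀ i, Measurable (τ i)) (b k N : ℕ) :
    MeasurableSet {ω : Ω | 0 ≤ τ (b + 0) ω ∧
      ∀ i j : ℕ, i < j → j < k → i < N → τ (b + i) ω < τ (b + j) ω} := by
  rw [Set.setOf_and]
  refine MeasurableSet.inter (measurableSet_le measurable_const (hτ _)) ?_
  rw [Set.setOf_forall]
  refine MeasurableSet.iInter fun i => ?_
  rw [Set.setOf_forall]
  refine MeasurableSet.iInter fun j => ?_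
  by_cases hij : i < j ∧ j < k ∧ i < N
  · have : {ω : Ω | i < j → j < k → i < N → τ (b + i) ω < τ (b + j) ω}
        = {ω | τ (b + i) ω < τ (b + j) ω} := by
      ext ω; simp [hij.1, hij.2.1, hij.2.2]
    rw [this]
    exact measurableSet_lt (hτ _) (hτ _)
  · have : {ω : Ω | i < j → j < k → i < N → τ (b + i) ω < τ (b + j) ω} = Set.univ := by
      ext ω; simp only [Set.mem_setOf_eq, Set.mem_univ, iff_true]
      intro h1 h2 h3; exact absurd ⟨h1, h2, h3⟩ hij
    rw [this]; exact MeasurableSet.univ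

lemma main_lemma {Ω : Type*} [MeasurableSpace Ω] (P : Measure Ω) [IsProbabilityMeasure P]
    (lam : ℕ → ℝ) (hpos : ∀ i, 0 < lam i) (τ : ℕ → Ω → ℝ) (hτ : ∀ i, Measurable (τ i))
    (hindep : iIndepFun τ P)
    (hlaw : ∀ i, P.map (τ i) = expMeasure (lam i)) (b : ℕ) :
    ∀ (k N : ℕ), 0 < N → N ≤ k → ∀ R : ℝ, 0 ≤ R →
    ∫⁻ ω, Set.indicator
        {ω : Ω | 0 ≤ τ (b + 0) ω ∧
          ∀ i j : ℕ, i < j → j < k → i < N → τ (b + i) ω < τ (b + j) ω}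
        (fun ω => ENNReal.ofReal (Real.exp (-(R * τ (b + (N - 1)) ω)))) ω ∂P
      = ENNReal.ofReal (∏ i ∈ Finset.range N,
          lam (b + i) / (R + ∑ j ∈ Finset.Ico i k, lam (b + j))) := by
  intro k
  induction k with
  | zero => intro N hN hNk; omega
  | succ k ih =>
    intro N hN hNk R hR
    rcases Nat.eq_zero_or_pos k with hk0 | hk
    · -- base case : k + 1 = 1, N = 1
      subst hk0
      have hN1 : N = 1 := by omega
      subst hN1
      have hset : {ω : Ω | 0 ≤ τ (b + 0) ω ∧
          ∀ i j : ℕ, i < j → j < 1 → i < 1 → τ (b + i) ω < τ (b + j) ω}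
          = (τ (b + 0)) ⁻¹' (Set.Ici 0) := by
        ext ω
        simp only [Set.mem_setOf_eq, Set.mem_preimage, Set.mem_Ici]
        constructor
        · exact fun h => h.1
        · intro h
          exact ⟨h, fun i j h1 h2 h3 => by omega⟩
      rw [hset]
      have hmg : Measurable fun x : ℝ => Set.indicator (Set.Ici 0)
          (fun x => ENNReal.ofReal (Real.exp (-(R * x)))) x := by
        refine Measurable.indicator ?_ measurableSet_Ici
        exact (((measurable_id.const_mul R).neg).exp).ennreal_ofReal
      have hcomp : ∫⁻ ω, Set.indicator ((τ (b + 0)) ⁻¹' (Set.Ici 0))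
          (fun ω => ENNReal.ofReal (Real.exp (-(R * τ (b + (1 - 1)) ω)))) ω ∂P
          = ∫⁻ x, Set.indicator (Set.Ici 0)
              (fun x => ENNReal.ofReal (Real.exp (-(R * x)))) x ∂(P.map (τ (b + 0))) :=
        (lintegral_map hmg (hτ _)).symm
      rw [hcomp, hlaw]
      rw [lintegral_indicator measurableSet_Ici]
      have hae : Set.Ici (0:ℝ) =ᵐ[expMeasure (lam (b+0))] Set.Ioi (0:ℝ) := by
        rw [Filter.eventuallyEq_set]
        have hnull : expMeasure (lam (b+0)) ({0} : Set ℝ) = 0 := by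
          have h1 : ({0} : Set ℝ) ⊆ Set.Iic 0 := Set.singleton_subset_iff.mpr Set.self_mem_Iic
          have h2 := measure_mono (μ := expMeasure (lam (b+0))) h1
          rw [expMeasure_null_Iic_zero] at h2
          exact le_antisymm h2 zero_le
        filter_upwards [measure_eq_zero_iff_ae_notMem.mp hnull] with x hx
        simp only [Set.mem_Ici, Set.mem_Ioi]
        constructor
        · intro h; rcases lt_or_eq_of_le h with h' | h'
          · exact h'
          · exact absurd h'.symm (by simpa using hx)
        · exact le_of_lt
      rw [setLIntegral_congr hae, exp_tail_lintegral (hpos (b+0)) hR le_rfl]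
      congr 1
      rw [Finset.prod_range_one]
      rw [show Finset.Ico 0 1 = {0} from rfl, Finset.sum_singleton]
      rw [mul_zero, neg_zero, Real.exp_zero, mul_one, add_comm R (lam (b+0))]
    · -- inductive step, k ≥ 1
      have hklt : k < k + 1 := Nat.lt_succ_self k
      -- the tuple
      set Y : Ω → (Fin k → ℝ) := fun ω (i : Fin k) => τ (b + (i : ℕ)) ω with hYdef
      have hYmeas : Measurable Y := measurable_pi_lambda _ fun i => hτ _
      have hXY : IndepFun (τ (b + k)) Y P := indep_tuple hτ hindep b k
      have hprob : IsProbabilityMeasure (expMeasure (lam (b + k))) :=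
        isProbabilityMeasure_expMeasure (hpos _)
      rcases lt_or_eq_of_le hNk with hNk' | hNk'
      · -- Case A : N ≤ k
        have hNk2 : N ≤ k := by omega
        have hN1k : N - 1 < k := by omega
        set S : Set (Fin k → ℝ) := {y : Fin k → ℝ |
          (∀ i : Fin k, (i : ℕ) = 0 → 0 ≤ y i) ∧
          ∀ i j : Fin k, i < j → (i : ℕ) < N → y i < y j} with hSdef
        have hS : MeasurableSet S := measurable_chainSet
        set c : (Fin k → ℝ) → ℝ := fun y => y ⟨N - 1, hN1k⟩ with hcdef
        have hc : Measurable c := measurable_pi_apply _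
        set w : (Fin k → ℝ) → ℝ≥0∞ :=
          fun y => ENNReal.ofReal (Real.exp (-(R * y ⟨N - 1, hN1k⟩))) with hwdef
        have hw : Measurable w :=
          (Measurable.exp (by exact ((measurable_pi_apply (X := fun _ : Fin k => ℝ) (⟨N - 1, hN1k⟩ : Fin k)).const_mul R).neg)).ennreal_ofReal
        set φ : ℝ → ℝ≥0∞ := fun t => ENNReal.ofReal (Real.exp (-(lam (b + k) * t))) with hφdef
        have hφm : Measurable φ :=
          (((measurable_id.const_mul _).neg).exp).ennreal_ofReal
        have hSc : ∀ y ∈ S, 0 ≤ c y := by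
          intro y hy
          rcases Nat.eq_zero_or_pos (N - 1) with h0 | h0
          · exact hy.1 _ h0
          · have h00 : (0:ℕ) < k := hk
            have := hy.2 ⟨0, hk⟩ ⟨N - 1, hN1k⟩ (Fin.mk_lt_mk.mpr (by omega)) (by show (0:ℕ) < N; omega)
            have h1 : 0 ≤ y ⟨0, hk⟩ := hy.1 _ rfl
            exact le_of_lt (lt_of_le_of_lt h1 this)
        have hφ : ∀ t : ℝ, 0 ≤ t →
            ∫⁻ x in Set.Ioi t, (1 : ℝ≥0∞) ∂(expMeasure (lam (b + k))) = φ t := by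
          intro t ht
          rw [setLIntegral_one, expMeasure_Ioi (hpos _) ht]
        have key := fubini_step P (τ (b + k)) (hτ _) Y hYmeas hXY
          (expMeasure (lam (b + k))) (hlaw _) S hS w hw (fun _ => (1:ℝ≥0∞)) measurable_const
          c hc φ hφm hSc hφ
        -- identify LHS
        have hsetL : {ω : Ω | 0 ≤ τ (b + 0) ω ∧
            ∀ i j : ℕ, i < j → j < k + 1 → i < N → τ (b + i) ω < τ (b + j) ω}
            = {ω : Ω | Y ω ∈ S ∧ c (Y ω) < τ (b + k) ω} := by
          ext ω
          simp only [Set.mem_setOf_eq, hSdef, hYdef, hcdef]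
          constructor
          · rintro ⟨h0, h⟩
            exact ⟨⟨fun i hi => by
              have hbi : b + (i : ℕ) = b + 0 := by rw [hi]
              rw [hbi]; exact h0, fun i j hij hiN => h i j hij (by omega) hiN⟩,
              h (N-1) k (by omega) (by omega) (by omega)⟩
          · rintro ⟨⟨h0, hchain⟩, hlast⟩
            refine ⟨h0 ⟨0, hk⟩ rfl, ?_⟩
            intro i j hij hjk1 hiN
            rcases Nat.lt_or_ge j k with hjk | hjk
            · exact hchain ⟨i, by omega⟩ ⟨j, hjk⟩ (Fin.mk_lt_mk.mpr (by omega)) (by show i < N; omega)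
            · have hjeq : j = k := by omega
              rw [hjeq]
              rcases Nat.lt_or_ge i (N-1) with hiN1 | hiN1
              · have h1 : τ (b + i) ω < τ (b + (N-1)) ω :=
                  hchain ⟨i, by omega⟩ ⟨N-1, hN1k⟩ (Fin.mk_lt_mk.mpr (by omega)) (by show i < N; omega)
                exact lt_trans h1 hlast
              · have hieq : i = N - 1 := by omega
                rw [hieq]
                exact hlast
        have hfunL : (fun ω : Ω => ENNReal.ofReal (Real.exp (-(R * τ (b + (N - 1)) ω))))
            = fun ω => w (Y ω) * (fun _ : ℝ => (1:ℝ≥0∞)) (τ (b + k) ω) := by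
          funext ω
          simp [hwdef, hYdef]
        rw [hsetL, hfunL, key]
        -- identify RHS with IH
        have hsetR : {ω : Ω | Y ω ∈ S} = {ω : Ω | 0 ≤ τ (b + 0) ω ∧
            ∀ i j : ℕ, i < j → j < k → i < N → τ (b + i) ω < τ (b + j) ω} := by
          ext ω
          simp only [Set.mem_setOf_eq, hSdef, hYdef]
          constructor
          · rintro ⟨h0, hchain⟩
            refine ⟨h0 ⟨0, hk⟩ rfl, ?_⟩
            intro i j hij hjk hiN
            exact hchain ⟨i, by omega⟩ ⟨j, hjk⟩ (Fin.mk_lt_mk.mpr (by omega)) (by show i < _; omega)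
          · rintro ⟨h0, hchain⟩
            refine ⟨fun i hi => by
              have : b + (i : ℕ) = b + 0 := by rw [hi]
              rw [this]; exact h0, fun i j hij hiN => hchain i j (Fin.lt_def.mp hij) j.isLt hiN⟩
        have hfunR : (fun ω : Ω => w (Y ω) * φ (c (Y ω)))
            = fun ω => ENNReal.ofReal
                (Real.exp (-((R + lam (b + k)) * τ (b + (N - 1)) ω))) := by
          funext ω
          show ENNReal.ofReal (Real.exp (-(R * τ (b + (N - 1)) ω)))
              * ENNReal.ofReal (Real.exp (-(lam (b + k) * τ (b + (N - 1)) ω))) = _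
          rw [← ENNReal.ofReal_mul (Real.exp_pos _).le, ← Real.exp_add]
          congr 2
          ring
        rw [hsetR]
        have hind : (Set.indicator {ω : Ω | 0 ≤ τ (b + 0) ω ∧
            ∀ i j : ℕ, i < j → j < k → i < N → τ (b + i) ω < τ (b + j) ω}
            (fun ω => w (Y ω) * φ (c (Y ω))))
            = Set.indicator {ω : Ω | 0 ≤ τ (b + 0) ω ∧
            ∀ i j : ℕ, i < j → j < k → i < N → τ (b + i) ω < τ (b + j) ω}
            (fun ω => ENNReal.ofReal
                (Real.exp (-((R + lam (b + k)) * τ (b + (N - 1)) ω)))) := by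
          rw [hfunR]
        rw [hind, ih N hN hNk2 (R + lam (b + k)) (by have := hpos (b+k); linarith)]
        congr 1
        refine Finset.prod_congr rfl fun i hi => ?_
        rw [Finset.mem_range] at hi
        congr 1
        rw [Finset.sum_Ico_succ_top (by omega : i ≤ k)]
        ring
      · -- Case B : N = k + 1
        have hNeq : N = k + 1 := hNk'
        subst hNeq
        have hk1k : k - 1 < k := by omega
        set S : Set (Fin k → ℝ) := {y : Fin k → ℝ |
          (∀ i : Fin k, (i : ℕ) = 0 → 0 ≤ y i) ∧
          ∀ i j : Fin k, i < j → (i : ℕ) < k → y i < y j} with hSdef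
        have hS : MeasurableSet S := measurable_chainSet
        set c : (Fin k → ℝ) → ℝ := fun y => y ⟨k - 1, hk1k⟩ with hcdef
        have hc : Measurable c := measurable_pi_apply _
        set g : ℝ → ℝ≥0∞ := fun x => ENNReal.ofReal (Real.exp (-(R * x))) with hgdef
        have hg : Measurable g :=
          (((measurable_id.const_mul R).neg).exp).ennreal_ofReal
        set φ : ℝ → ℝ≥0∞ := fun t => ENNReal.ofReal (lam (b + k) / (lam (b + k) + R) *
          Real.exp (-((R + lam (b + k)) * t))) with hφdef
        have hφm : Measurable φ := by
          apply Measurable.ennreal_ofReal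
          exact (((measurable_id.const_mul _).neg).exp).const_mul _
        have hSc : ∀ y ∈ S, 0 ≤ c y := by
          intro y hy
          rcases Nat.eq_zero_or_pos (k - 1) with h0 | h0
          · exact hy.1 _ h0
          · have := hy.2 ⟨0, hk⟩ ⟨k - 1, hk1k⟩ (by simp [Fin.lt_def]; omega) (by simp; omega)
            have h1 : 0 ≤ y ⟨0, hk⟩ := hy.1 _ rfl
            exact le_of_lt (lt_of_le_of_lt h1 this)
        have hφ : ∀ t : ℝ, 0 ≤ t →
            ∫⁻ x in Set.Ioi t, g x ∂(expMeasure (lam (b + k))) = φ t := by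
          intro t ht
          rw [exp_tail_lintegral (hpos _) hR ht, hφdef,
            show -((lam (b + k) + R) * t) = -((R + lam (b + k)) * t) by ring]
        have key := fubini_step P (τ (b + k)) (hτ _) Y hYmeas hXY
          (expMeasure (lam (b + k))) (hlaw _) S hS (fun _ => (1:ℝ≥0∞)) measurable_const
          g hg c hc φ hφm hSc hφ
        have hsetL : {ω : Ω | 0 ≤ τ (b + 0) ω ∧
            ∀ i j : ℕ, i < j → j < k + 1 → i < k + 1 → τ (b + i) ω < τ (b + j) ω}
            = {ω : Ω | Y ω ∈ S ∧ c (Y ω) < τ (b + k) ω} := by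
          ext ω
          simp only [Set.mem_setOf_eq, hSdef, hYdef, hcdef]
          constructor
          · rintro ⟨h0, h⟩
            exact ⟨⟨fun i hi => by
              have hbi : b + (i : ℕ) = b + 0 := by rw [hi]
              rw [hbi]; exact h0, fun i j hij hik => h i j hij (by omega) (by omega)⟩,
              h (k-1) k (by omega) (by omega) (by omega)⟩
          · rintro ⟨⟨h0, hchain⟩, hlast⟩
            refine ⟨h0 ⟨0, hk⟩ rfl, ?_⟩
            intro i j hij hjk1 hiN
            rcases Nat.lt_or_ge j k with hjk | hjk
            · exact hchain ⟨i, by omega⟩ ⟨j, hjk⟩ (Fin.mk_lt_mk.mpr (by omega)) (by show i < k; omega)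
            · have hjeq : j = k := by omega
              rw [hjeq]
              rcases Nat.lt_or_ge i (k-1) with hiN1 | hiN1
              · have h1 : τ (b + i) ω < τ (b + (k-1)) ω :=
                  hchain ⟨i, by omega⟩ ⟨k-1, hk1k⟩ (Fin.mk_lt_mk.mpr (by omega)) (by show i < k; omega)
                exact lt_trans h1 hlast
              · have hieq : i = k - 1 := by omega
                rw [hieq]
                exact hlast
        have hfunL : (fun ω : Ω => ENNReal.ofReal (Real.exp (-(R * τ (b + (k + 1 - 1)) ω))))
            = fun ω => (fun _ : Fin k → ℝ => (1:ℝ≥0∞)) (Y ω) * g (τ (b + k) ω) := by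
          funext ω
          simp [hgdef]
        rw [hsetL, hfunL, key]
        have hsetR : {ω : Ω | Y ω ∈ S} = {ω : Ω | 0 ≤ τ (b + 0) ω ∧
            ∀ i j : ℕ, i < j → j < k → i < k → τ (b + i) ω < τ (b + j) ω} := by
          ext ω
          simp only [Set.mem_setOf_eq, hSdef, hYdef]
          constructor
          · rintro ⟨h0, hchain⟩
            refine ⟨h0 ⟨0, hk⟩ rfl, ?_⟩
            intro i j hij hjk hiN
            exact hchain ⟨i, by omega⟩ ⟨j, hjk⟩ (Fin.mk_lt_mk.mpr (by omega)) (by show i < _; omega)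
          · rintro ⟨h0, hchain⟩
            refine ⟨fun i hi => by
              have : b + (i : ℕ) = b + 0 := by rw [hi]
              rw [this]; exact h0, fun i j hij hiN => hchain i j (Fin.lt_def.mp hij) j.isLt hiN⟩
        have hfunR : (fun ω : Ω => (fun _ : Fin k → ℝ => (1:ℝ≥0∞)) (Y ω) * φ (c (Y ω)))
            = fun ω => ENNReal.ofReal (lam (b + k) / (lam (b + k) + R)) *
                ENNReal.ofReal
                  (Real.exp (-((R + lam (b + k)) * τ (b + (k - 1)) ω))) := by
          have hnn : (0:ℝ) ≤ lam (b + k) / (lam (b + k) + R) :=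
            div_nonneg (hpos _).le (by have := hpos (b + k); linarith)
          funext ω
          show (1:ℝ≥0∞) * ENNReal.ofReal (lam (b + k) / (lam (b + k) + R) *
              Real.exp (-((R + lam (b + k)) * τ (b + (k - 1)) ω))) = _
          rw [one_mul, ENNReal.ofReal_mul hnn]
        rw [hsetR]
        have hind : (Set.indicator {ω : Ω | 0 ≤ τ (b + 0) ω ∧
            ∀ i j : ℕ, i < j → j < k → i < k → τ (b + i) ω < τ (b + j) ω}
            (fun ω => (fun _ : Fin k → ℝ => (1:ℝ≥0∞)) (Y ω) * φ (c (Y ω))))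
            = fun ω => ENNReal.ofReal (lam (b + k) / (lam (b + k) + R)) *
                Set.indicator {ω : Ω | 0 ≤ τ (b + 0) ω ∧
                  ∀ i j : ℕ, i < j → j < k → i < k → τ (b + i) ω < τ (b + j) ω}
                (fun ω => ENNReal.ofReal
                  (Real.exp (-((R + lam (b + k)) * τ (b + (k - 1)) ω)))) ω := by
          rw [hfunR]
          funext ω
          by_cases hω : ω ∈ {ω : Ω | 0 ≤ τ (b + 0) ω ∧
              ∀ i j : ℕ, i < j → j < k → i < k → τ (b + i) ω < τ (b + j) ω}
          · rw [Set.indicator_of_mem hω, Set.indicator_of_mem hω]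
          · rw [Set.indicator_of_notMem hω, Set.indicator_of_notMem hω, mul_zero]
        rw [hind, lintegral_const_mul _ ((Measurable.ennreal_ofReal (f := fun ω => Real.exp (-((R + lam (b + k)) * τ (b + (k - 1)) ω))) (Measurable.exp (by exact ((hτ _).const_mul _).neg))).indicator
          (measurable_chainEvent hτ b k k)),
          ih k hk le_rfl (R + lam (b + k)) (by have := hpos (b+k); linarith)]
        rw [← ENNReal.ofReal_mul (div_nonneg (hpos _).le (by have := hpos (b + k); linarith))]
        congr 1
        rw [Finset.prod_range_succ]
        rw [mul_comm]
        congr 1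
        · refine Finset.prod_congr rfl fun i hi => ?_
          rw [Finset.mem_range] at hi
          congr 1
          rw [Finset.sum_Ico_succ_top (by omega : i ≤ k)]
          ring
        · rw [Finset.sum_Ico_succ_top (le_refl k), Finset.Ico_self, Finset.sum_empty]
          rw [add_comm (lam (b+k)) R]
          norm_num

lemma measurable_forall_lt {Ω : Type*} [MeasurableSpace Ω]
    {τ : ℕ → Ω → ℝ} (hτ : ∀ i, Measurable (τ i)) (p : ℕ → ℕ → Prop) (b : ℕ) :
    MeasurableSet {ω : Ω | ∀ i j : ℕ, p i j → τ (b + i) ω < τ (b + j) ω} := by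
  rw [Set.setOf_forall]
  refine MeasurableSet.iInter fun i => ?_
  rw [Set.setOf_forall]
  refine MeasurableSet.iInter fun j => ?_
  by_cases h : p i j
  · have : {ω : Ω | p i j → τ (b + i) ω < τ (b + j) ω} = {ω | τ (b + i) ω < τ (b + j) ω} := by
      ext ω; simp [h]
    rw [this]; exact measurableSet_lt (hτ _) (hτ _)
  · have : {ω : Ω | p i j → τ (b + i) ω < τ (b + j) ω} = Set.univ := by
      ext ω; simp [h]
    rw [this]; exact MeasurableSet.univ

theorem urns_filled_in_order {Ω : Type*} [MeasurableSpace Ω] (P : Measure Ω)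
    [IsProbabilityMeasure P] (lam : ℕ → ℝ) (hpos : ∀ i, 0 < lam i)
    (hsum : Summable lam) (τ : ℕ → Ω → ℝ) (hτ : ∀ i, Measurable (τ i))
    (hindep : iIndepFun τ P)
    (htail : ∀ i, ∀ t : ℝ, 0 ≤ t →
      P {ω | t < τ i ω} = ENNReal.ofReal (Real.exp (-(lam i * t)))) :
    (0 < P {ω | ∀ n m : ℕ, n < m → τ n ω < τ m ω} ↔
      0 < ⨅ N : ℕ, ∏ n ∈ Finset.range N, (lam n / ∑' m : {m : ℕ // n ≤ m}, lam m)) ∧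
    (∀ n : ℕ, P {ω | ∀ m : ℕ, n < m → τ n ω < τ m ω}
      = ENNReal.ofReal (lam n / ∑' m : {m : ℕ // n ≤ m}, lam m)) := by
  classical
  have hlaw : ∀ i, P.map (τ i) = expMeasure (lam i) := fun i =>
    map_eq_expMeasure P (hpos i) (hτ i) (htail i)
  -- null sets
  have hnull : ∀ c : ℕ, P {ω | τ c ω < 0} = 0 := by
    intro c
    have h1 := htail c 0 le_rfl
    simp only [mul_zero, neg_zero, Real.exp_zero, ENNReal.ofReal_one] at h1
    have hms : MeasurableSet {ω : Ω | (0:ℝ) < τ c ω} :=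
      measurableSet_lt measurable_const (hτ c)
    have h2 := measure_compl hms (measure_ne_top P _)
    rw [h1, measure_univ, tsub_self] at h2
    refine le_antisymm (le_trans (measure_mono ?_) h2.le) zero_le
    intro ω hω
    simp only [Set.mem_setOf_eq] at hω
    simp only [Set.mem_compl_iff, Set.mem_setOf_eq, not_lt]
    linarith
  -- event probabilities
  have hevent : ∀ b k N : ℕ, 0 < N → N ≤ k →
      P {ω | ∀ i j : ℕ, i < j → j < k → i < N → τ (b + i) ω < τ (b + j) ω}
        = ENNReal.ofReal (∏ i ∈ Finset.range N,
            lam (b + i) / ∑ j ∈ Finset.Ico i k, lam (b + j)) := by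
    intro b k N hN hNk
    have h := main_lemma P lam hpos τ hτ hindep hlaw b k N hN hNk 0 le_rfl
    simp only [zero_mul, neg_zero, Real.exp_zero, ENNReal.ofReal_one, zero_add] at h
    rw [lintegral_indicator_const (measurable_chainEvent hτ b k N) 1, one_mul] at h
    rw [← h]
    have hseteq : {ω : Ω | 0 ≤ τ (b + 0) ω ∧
        ∀ i j : ℕ, i < j → j < k → i < N → τ (b + i) ω < τ (b + j) ω}
        = {ω | ∀ i j : ℕ, i < j → j < k → i < N → τ (b + i) ω < τ (b + j) ω}
          ∩ {ω | 0 ≤ τ (b + 0) ω} := by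
      ext ω; simp only [Set.mem_setOf_eq, Set.mem_inter_iff]; tauto
    rw [hseteq, measure_inter_conull ?_]
    have hcompl : {ω : Ω | 0 ≤ τ (b + 0) ω}ᶜ = {ω | τ (b + 0) ω < 0} := by
      ext ω; simp [not_le]
    rw [hcompl]
    exact hnull _
  -- tsum facts
  set Sf : ℕ → ℝ := fun n => ∑' m : {m : ℕ // n ≤ m}, lam m with hSfdef
  have hSummShift : ∀ n, Summable (fun j => lam (n + j)) := fun n =>
    hsum.comp_injective (add_right_injective n)
  have hSeq : ∀ n, Sf n = ∑' j : ℕ, lam (n + j) := by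
    intro n
    exact (Equiv.tsum_eq (⟨fun j => ⟨n + j, Nat.le_add_right n j⟩, fun m => m.1 - n,
        fun j => by simp, fun m => by ext; simp only []; omega⟩ : ℕ ≃ {m : ℕ // n ≤ m})
      (fun m : {m : ℕ // n ≤ m} => lam m)).symm
  have hSpos : ∀ n, 0 < Sf n := by
    intro n
    rw [hSeq n]
    exact Summable.tsum_pos (hSummShift n) (fun j => (hpos _).le) 0 (hpos _)
  have hStendsto : ∀ n, Filter.Tendsto (fun M => ∑ j ∈ Finset.range M, lam (n + j))
      Filter.atTop (nhds (Sf n)) := by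
    intro n
    rw [hSeq n]
    exact (hSummShift n).hasSum.tendsto_sum_nat
  have hratio_le : ∀ n, lam n / Sf n ≤ 1 := by
    intro n
    rw [div_le_one (hSpos n)]
    have h := Summable.le_tsum (hSummShift n) 0 (fun j _ => (hpos _).le)
    rw [← hSeq n] at h
    simpa using h
  refine ⟨?_, ?_⟩
  · -- part 1
    set q : ℕ → ℝ := fun N => ∏ i ∈ Finset.range N, lam i / Sf i with hqdef
    have hqnonneg : ∀ N, 0 ≤ q N := fun N =>
      Finset.prod_nonneg fun i _ => div_nonneg (hpos i).le (hSpos i).le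
    have hqanti : Antitone q := by
      refine antitone_nat_of_succ_le fun N => ?_
      rw [hqdef]
      simp only [Finset.prod_range_succ]
      calc q N * (lam N / Sf N) ≤ q N * 1 :=
            mul_le_mul_of_nonneg_left (hratio_le N) (hqnonneg N)
        _ = q N := mul_one _
    -- events
    set E : ℕ → ℕ → Set Ω := fun N M =>
      {ω | ∀ i j : ℕ, i < j → j < N + M → i < N → τ i ω < τ j ω} with hEdef
    set EN : ℕ → Set Ω := fun N => {ω | ∀ i j : ℕ, i < j → i < N → τ i ω < τ j ω} with hENdef
    have hEmeas : ∀ N M, MeasurableSet (E N M) := by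
      intro N M
      have := measurable_forall_lt hτ (fun i j => i < j ∧ j < N + M ∧ i < N) 0
      have heq : {ω : Ω | ∀ i j : ℕ, (i < j ∧ j < N + M ∧ i < N) → τ (0 + i) ω < τ (0 + j) ω}
          = E N M := by
        ext ω
        simp only [Set.mem_setOf_eq, hEdef, zero_add]
        constructor
        · exact fun h i j h1 h2 h3 => h i j ⟨h1, h2, h3⟩
        · exact fun h i j ⟨h1, h2, h3⟩ => h i j h1 h2 h3
      rw [← heq]; exact this
    have hENmeas : ∀ N, MeasurableSet (EN N) := by
      intro N
      have := measurable_forall_lt hτ (fun i j => i < j ∧ i < N) 0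
      have heq : {ω : Ω | ∀ i j : ℕ, (i < j ∧ i < N) → τ (0 + i) ω < τ (0 + j) ω} = EN N := by
        ext ω
        simp only [Set.mem_setOf_eq, hENdef, zero_add]
        constructor
        · exact fun h i j h1 h2 => h i j ⟨h1, h2⟩
        · exact fun h i j ⟨h1, h2⟩ => h i j h1 h2
      rw [← heq]; exact this
    have hEprob : ∀ N M : ℕ, 0 < N → P (E N M)
        = ENNReal.ofReal (∏ i ∈ Finset.range N, lam i / ∑ j ∈ Finset.Ico i (N + M), lam j) := by
      intro N M hN
      have h := hevent 0 (N + M) N hN (Nat.le_add_right N M)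
      simp only [zero_add] at h
      rw [hEdef]
      exact h
    -- P (EN N) = ofReal (q N)
    have hENprob : ∀ N : ℕ, 0 < N → P (EN N) = ENNReal.ofReal (q N) := by
      intro N hN
      have hInter : ⋂ M : ℕ, E N M = EN N := by
        ext ω
        simp only [Set.mem_iInter, hEdef, hENdef, Set.mem_setOf_eq]
        constructor
        · intro h i j h1 h2
          exact h (j + 1) i j h1 (by omega) h2
        · intro h M i j h1 h2 h3
          exact h i j h1 h3
      have hanti : Antitone (E N) := by
        intro M M' hMM ω hω
        intro i j h1 h2 h3
        exact hω i j h1 (by omega) h3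
      have htendsto1 := tendsto_measure_iInter_atTop
        (fun M => (hEmeas N M).nullMeasurableSet) hanti ⟨0, measure_ne_top P _⟩
      rw [hInter] at htendsto1
      -- denominators tendsto
      have hDen : ∀ i : ℕ, Filter.Tendsto (fun M => ∑ j ∈ Finset.Ico i (N + M), lam j)
          Filter.atTop (nhds (Sf i)) := by
        intro i
        have hcomp : Filter.Tendsto (fun M : ℕ => N + M - i) Filter.atTop Filter.atTop :=
          Filter.tendsto_atTop_atTop.mpr (fun c => ⟨c + i, fun a ha => by omega⟩)
        have := (hStendsto i).comp hcomp
        refine this.congr fun M => ?_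
        simp only [Function.comp_apply]
        rw [Finset.sum_Ico_eq_sum_range]
      have hProdT : Filter.Tendsto
          (fun M => ∏ i ∈ Finset.range N, lam i / ∑ j ∈ Finset.Ico i (N + M), lam j)
          Filter.atTop (nhds (q N)) := by
        rw [hqdef]
        refine tendsto_finset_prod _ fun i _ => ?_
        exact Filter.Tendsto.div tendsto_const_nhds (hDen i) (hSpos i).ne'
      have htendsto2 : Filter.Tendsto (fun M => P (E N M)) Filter.atTop
          (nhds (ENNReal.ofReal (q N))) := by
        have : (fun M => P (E N M)) = fun M => ENNReal.ofReal
            (∏ i ∈ Finset.range N, lam i / ∑ j ∈ Finset.Ico i (N + M), lam j) := by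
          funext M; exact hEprob N M hN
        rw [this]
        exact (ENNReal.continuous_ofReal.continuousAt).tendsto.comp hProdT
      exact tendsto_nhds_unique htendsto1 htendsto2
    -- full event
    have hInterN : ⋂ N : ℕ, EN N = {ω | ∀ n m : ℕ, n < m → τ n ω < τ m ω} := by
      ext ω
      simp only [Set.mem_iInter, hENdef, Set.mem_setOf_eq]
      constructor
      · intro h n m hnm
        exact h (n + 1) n m hnm (by omega)
      · intro h N i j h1 h2
        exact h i j h1
    have hantiN : Antitone EN := by
      intro N N' hNN ω hω i j h1 h2
      exact hω i j h1 (by omega)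
    have htendstoN := tendsto_measure_iInter_atTop
      (fun N => (hENmeas N).nullMeasurableSet) hantiN ⟨0, measure_ne_top P _⟩
    rw [hInterN] at htendstoN
    have hqbdd : BddBelow (Set.range q) := by
      refine ⟨0, ?_⟩
      rintro x ⟨N, rfl⟩
      exact hqnonneg N
    have hqtendsto : Filter.Tendsto q Filter.atTop (nhds (⨅ N, q N)) :=
      tendsto_atTop_ciInf hqanti hqbdd
    have htendstoQ : Filter.Tendsto (fun N => P (EN N)) Filter.atTop
        (nhds (ENNReal.ofReal (⨅ N, q N))) := by
      have hETQ : Filter.Tendsto (fun N => ENNReal.ofReal (q N)) Filter.atTop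
          (nhds (ENNReal.ofReal (⨅ N, q N))) :=
        (ENNReal.continuous_ofReal.continuousAt).tendsto.comp hqtendsto
      refine Filter.Tendsto.congr' ?_ hETQ
      filter_upwards [Filter.eventually_gt_atTop 0] with N hN
      exact (hENprob N hN).symm
    have hPT : P {ω | ∀ n m : ℕ, n < m → τ n ω < τ m ω} = ENNReal.ofReal (⨅ N, q N) :=
      tendsto_nhds_unique htendstoN htendstoQ
    rw [hPT]
    exact ENNReal.ofReal_pos
  · -- part 2
    intro n
    set D : ℕ → Set Ω := fun M =>
      {ω | ∀ i j : ℕ, i < j → j < M + 1 → i < 1 → τ (n + i) ω < τ (n + j) ω} with hDdef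
    have hDmeas : ∀ M, MeasurableSet (D M) := by
      intro M
      have := measurable_forall_lt hτ (fun i j => i < j ∧ j < M + 1 ∧ i < 1) n
      have heq : {ω : Ω | ∀ i j : ℕ, (i < j ∧ j < M + 1 ∧ i < 1) → τ (n + i) ω < τ (n + j) ω}
          = D M := by
        ext ω
        simp only [Set.mem_setOf_eq, hDdef]
        constructor
        · exact fun h i j h1 h2 h3 => h i j ⟨h1, h2, h3⟩
        · exact fun h i j ⟨h1, h2, h3⟩ => h i j h1 h2 h3
      rw [← heq]; exact this
    have hInterD : ⋂ M : ℕ, D M = {ω | ∀ m : ℕ, n < m → τ n ω < τ m ω} := by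
      ext ω
      simp only [Set.mem_iInter, hDdef, Set.mem_setOf_eq]
      constructor
      · intro h m hm
        have := h (m - n) 0 (m - n) (by omega) (by omega) (by omega)
        have hmn : n + (m - n) = m := by omega
        rw [hmn] at this
        exact this
      · intro h M i j h1 h2 h3
        have hi : i = 0 := by omega
        subst hi
        have := h (n + j) (by omega)
        simpa using this
    have hantiD : Antitone D := by
      intro M M' hMM ω hω i j h1 h2 h3
      exact hω i j h1 (by omega) h3
    have htendstoD := tendsto_measure_iInter_atTop
      (fun M => (hDmeas M).nullMeasurableSet) hantiD ⟨0, measure_ne_top P _⟩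
    rw [hInterD] at htendstoD
    have hDprob : ∀ M : ℕ, P (D M)
        = ENNReal.ofReal (lam n / ∑ j ∈ Finset.range (M + 1), lam (n + j)) := by
      intro M
      have h := hevent n (M + 1) 1 one_pos (by omega)
      rw [hDdef]
      rw [h]
      congr 1
      rw [Finset.prod_range_one, Finset.range_eq_Ico]
      simp
    have htendsto2 : Filter.Tendsto (fun M => P (D M)) Filter.atTop
        (nhds (ENNReal.ofReal (lam n / Sf n))) := by
      have hden : Filter.Tendsto (fun M => ∑ j ∈ Finset.range (M + 1), lam (n + j))
          Filter.atTop (nhds (Sf n)) :=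
        (hStendsto n).comp (Filter.tendsto_add_atTop_nat 1)
      have hdiv : Filter.Tendsto (fun M => lam n / ∑ j ∈ Finset.range (M + 1), lam (n + j))
          Filter.atTop (nhds (lam n / Sf n)) :=
        Filter.Tendsto.div tendsto_const_nhds hden (hSpos n).ne'
      have : (fun M => P (D M)) = fun M => ENNReal.ofReal
          (lam n / ∑ j ∈ Finset.range (M + 1), lam (n + j)) := by
        funext M; exact hDprob M
      rw [this]
      exact (ENNReal.continuous_ofReal.continuousAt).tendsto.comp hdiv
    exact tendsto_nhds_unique htendstoD htendsto2
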